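/- Let z₀ ∈ ℂ with 0 < |z₀|, let 0 < r, let λ ∈ ℂ with |λ| ≤ 1, and set ρ₁ = r/|z₀|, ρ₂ = |z₀| + r, ρ = max(ρ₁, ρ₂). Then for every natural number n there exists a polynomial qₙ of degree at most n with coefficients in ℤ + iℤ such that sup_{|z−z₀| ≤ r} |λ − qₙ(z)| ≤ (n+1)·ρⁿ. -/

import Mathlib

open Polynomial Finset

lemma round_gauss (c : ℂ) : ∃ g : ℂ, (∃ a b : ℤ, g = (a : ℂ) + (b : ℂ) * Complex.I) ∧
    ‖c - g‖ ≤ 1 := by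
  refine ⟨((round c.re : ℤ) : ℂ) + ((round c.im : ℤ) : ℂ) * Complex.I, ⟨_, _, rfl⟩, ?_⟩
  set g : ℂ := ((round c.re : ℤ) : ℂ) + ((round c.im : ℤ) : ℂ) * Complex.I with hg
  have h1 : (c - g).re = c.re - round c.re := by simp [hg]
  have h2 : (c - g).im = c.im - round c.im := by simp [hg]
  calc ‖c - g‖ ≤ |(c - g).re| + |(c - g).im| :=
        Complex.norm_le_abs_re_add_abs_im _
    _ ≤ 1/2 + 1/2 := by
        rw [h1, h2]; exact add_le_add (abs_sub_round _) (abs_sub_round _)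
    _ = 1 := by norm_num

lemma divX_degree_le {p : Polynomial ℂ} {n : ℕ} (h : p.degree ≤ (n + 1 : ℕ)) :
    p.divX.degree ≤ (n : ℕ) := by
  by_cases hp : p = 0
  · simp [hp]
  · have h1 := Polynomial.degree_divX_lt hp
    have h2 : p.divX.degree < ((n + 1 : ℕ) : WithBot ℕ) := lt_of_lt_of_le h1 h
    rw [Polynomial.degree_le_iff_coeff_zero]
    rw [Polynomial.degree_lt_iff_coeff_zero] at h2
    intro m hm
    have hm' : n < m := by exact_mod_cast hm
    exact h2 m (by exact_mod_cast hm')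

lemma key (z₀ : ℂ) (hz₀ : z₀ ≠ 0) (n : ℕ) :
    ∀ P : Polynomial ℂ, P.degree ≤ n →
    ∃ q : Polynomial ℂ, q.degree ≤ n ∧
      (∀ k : ℕ, ∃ a b : ℤ, q.coeff k = (a : ℂ) + (b : ℂ) * Complex.I) ∧
      ∃ e : ℕ → ℂ,
        (∀ k, k ≤ n → ‖e k‖ ≤ 1 / ‖z₀‖ ^ (n - k)) ∧
        ∀ z : ℂ, P.eval z = q.eval z + ∑ k ∈ range (n+1), e k * (z₀ - z)^(n-k) * z^k := by
  have hz₀' : ∀ m : ℕ, z₀ ^ m ≠ 0 := fun m => pow_ne_zero m hz₀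
  induction n with
  | zero =>
    intro P hP
    obtain ⟨g, hgab, hge⟩ := round_gauss (P.coeff 0)
    refine ⟨Polynomial.C g, degree_C_le, ?_, fun _ => P.coeff 0 - g, ?_, ?_⟩
    · intro k
      cases k with
      | zero => simpa using hgab
      | succ k => exact ⟨0, 0, by simp⟩
    · intro k hk
      simpa using hge
    · intro z
      have hPC : P = Polynomial.C (P.coeff 0) :=
        Polynomial.eq_C_of_degree_le_zero (by simpa using hP)
      conv_lhs => rw [hPC]
      simp
  | succ n ih =>
    intro P hP
    obtain ⟨g, hgab, hge⟩ := round_gauss (P.coeff 0)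
    set e₀ : ℂ := (P.coeff 0 - g) / z₀ ^ (n+1) with he₀
    set R : Polynomial ℂ :=
      P - Polynomial.C g - Polynomial.C e₀ * (Polynomial.C z₀ - Polynomial.X) ^ (n+1) with hR
    have hR0 : R.coeff 0 = 0 := by
      have hc : ((Polynomial.C z₀ - Polynomial.X : Polynomial ℂ) ^ (n+1)).coeff 0
          = z₀ ^ (n+1) := by
        rw [Polynomial.coeff_zero_eq_eval_zero]
        simp
      have : R.coeff 0 = P.coeff 0 - g - e₀ * z₀ ^ (n+1) := by
        simp [hR, Polynomial.coeff_sub, Polynomial.coeff_C_mul, hc]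
      rw [this, he₀]
      field_simp
      ring
    have hdegp : (Polynomial.C z₀ - Polynomial.X : Polynomial ℂ).degree = 1 := by
      rw [show (Polynomial.C z₀ - Polynomial.X : Polynomial ℂ)
          = -(Polynomial.X - Polynomial.C z₀) by ring,
        Polynomial.degree_neg, Polynomial.degree_X_sub_C]
    have hdegpow : ((Polynomial.C z₀ - Polynomial.X : Polynomial ℂ) ^ (n+1)).degree
        = ((n+1 : ℕ) : WithBot ℕ) := by
      rw [Polynomial.degree_pow, hdegp]
      simp
    have hdegR : R.degree ≤ ((n+1 : ℕ) : WithBot ℕ) := by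
      refine le_trans (Polynomial.degree_sub_le _ _) (max_le ?_ ?_)
      · refine le_trans (Polynomial.degree_sub_le _ _) (max_le hP ?_)
        exact le_trans Polynomial.degree_C_le (by exact_mod_cast Nat.zero_le (n+1))
      · refine le_trans (Polynomial.degree_mul_le _ _) ?_
        rw [hdegpow]
        calc (Polynomial.C e₀).degree + ((n+1 : ℕ) : WithBot ℕ)
            ≤ 0 + ((n+1 : ℕ) : WithBot ℕ) := add_le_add_left Polynomial.degree_C_le _
          _ = ((n+1 : ℕ) : WithBot ℕ) := zero_add _
    set Q : Polynomial ℂ := R.divX with hQ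
    have hQdeg : Q.degree ≤ (n : ℕ) := divX_degree_le hdegR
    have hXQ : Polynomial.X * Q = R := by
      have h := Polynomial.X_mul_divX_add R
      rwa [hR0, map_zero, add_zero] at h
    obtain ⟨q', hq'deg, hq'ab, e', he'bound, he'eval⟩ := ih Q hQdeg
    refine ⟨Polynomial.C g + Polynomial.X * q', ?_, ?_,
      (fun k => if k = 0 then e₀ else e' (k - 1)), ?_, ?_⟩
    · refine le_trans (Polynomial.degree_add_le _ _) (max_le ?_ ?_)
      · exact le_trans Polynomial.degree_C_le (by exact_mod_cast Nat.zero_le (n+1))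
      · refine le_trans (Polynomial.degree_mul_le _ _) ?_
        rw [Polynomial.degree_X]
        calc (1 : WithBot ℕ) + q'.degree ≤ 1 + (n : ℕ) := by
              exact add_le_add_right hq'deg 1
          _ = ((n+1 : ℕ) : WithBot ℕ) := by
              push_cast
              rw [add_comm]
    · intro k
      cases k with
      | zero =>
        have : (Polynomial.C g + Polynomial.X * q').coeff 0 = g := by
          simp [Polynomial.mul_coeff_zero]
        rw [this]; exact hgab
      | succ k =>
        have : (Polynomial.C g + Polynomial.X * q').coeff (k+1) = q'.coeff k := by
          simp [Polynomial.coeff_X_mul, Polynomial.coeff_C]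
        rw [this]; exact hq'ab k
    · intro k hk
      beta_reduce
      cases k with
      | zero =>
        have hek : (if (0:ℕ) = 0 then e₀ else e' (0 - 1)) = e₀ := if_pos rfl
        rw [hek, he₀, norm_div, norm_pow, Nat.sub_zero]
        gcongr
      | succ k =>
        simp only [if_neg (Nat.succ_ne_zero k), Nat.add_sub_cancel, Nat.succ_sub_succ]
        exact he'bound k (by omega)
    · intro z
      beta_reduce
      clear_value e₀ R Q
      have hRz : R.eval z = z * Q.eval z := by
        conv_lhs => rw [← hXQ]
        simp
      have hRz' : R.eval z = P.eval z - g - e₀ * (z₀ - z) ^ (n+1) := by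
        simp [hR]
      have hPz : P.eval z = g + e₀ * (z₀ - z) ^ (n+1) + z * Q.eval z := by
        rw [← hRz, hRz']
        ring
      rw [hPz, he'eval z]
      conv_rhs => rw [Finset.sum_range_succ']
      have hsummand : ∀ k ∈ range (n+1),
          (if k + 1 = 0 then e₀ else e' (k + 1 - 1)) * (z₀ - z) ^ (n + 1 - (k+1)) * z ^ (k+1)
          = e' k * (z₀ - z) ^ (n - k) * z ^ (k+1) := by
        intro k _
        rw [if_neg (Nat.succ_ne_zero k), Nat.add_sub_cancel, Nat.succ_sub_succ]
      rw [Finset.sum_congr rfl hsummand]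
      simp only [eq_self_iff_true, if_true, pow_zero, mul_one, Nat.sub_zero,
        Polynomial.eval_add, Polynomial.eval_C, Polynomial.eval_mul, Polynomial.eval_X]
      rw [mul_add, Finset.mul_sum]
      have : ∀ k ∈ range (n+1), z * (e' k * (z₀ - z) ^ (n - k) * z ^ k)
          = e' k * (z₀ - z) ^ (n - k) * z ^ (k+1) := by
        intro k _
        ring
      rw [Finset.sum_congr rfl this]
      ring

theorem stmt_1 (z₀ : ℂ) (hz₀ : 0 < ‖z₀‖) (r : ℝ) (hr : 0 < r)
    (lam : ℂ) (hlam : ‖lam‖ ≤ 1) (n : ℕ) :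
    ∃ q : Polynomial ℂ, q.degree ≤ n ∧
      (∀ k : ℕ, ∃ a b : ℤ, q.coeff k = (a : ℂ) + (b : ℂ) * Complex.I) ∧
      ∀ z : ℂ, ‖z - z₀‖ ≤ r →
        ‖lam - q.eval z‖ ≤
          (n + 1) * max (r / ‖z₀‖) (‖z₀‖ + r) ^ n := by
  have hne : z₀ ≠ 0 := by
    intro h
    rw [h] at hz₀
    simp at hz₀
  obtain ⟨q, hdeg, hab, e, hbound, heval⟩ :=
    key z₀ hne n (Polynomial.C lam)
      (le_trans Polynomial.degree_C_le (by exact_mod_cast Nat.zero_le n))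
  refine ⟨q, hdeg, hab, fun z hz => ?_⟩
  set ρ : ℝ := max (r / ‖z₀‖) (‖z₀‖ + r) with hρ
  have h1 : lam - q.eval z = ∑ k ∈ range (n+1), e k * (z₀ - z)^(n-k) * z^k := by
    have h := heval z
    rw [Polynomial.eval_C] at h
    linear_combination h
  have hzb : ‖z‖ ≤ ‖z₀‖ + r := by
    calc ‖z‖ = ‖z₀ + (z - z₀)‖ := by ring_nf
      _ ≤ ‖z₀‖ + ‖z - z₀‖ := norm_add_le _ _
      _ ≤ ‖z₀‖ + r := by linarith
  have hz0z : ‖z₀ - z‖ ≤ r := by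
    have hne : z₀ - z = -(z - z₀) := by ring
    rw [hne, norm_neg]
    exact hz
  have hterm : ∀ k ∈ range (n+1),
      ‖e k * (z₀ - z)^(n-k) * z^k‖ ≤ ρ ^ n := by
    intro k hk
    have hk' : k ≤ n := by
      simp only [Finset.mem_range] at hk
      omega
    have hρ1 : (0:ℝ) ≤ r / ‖z₀‖ := by positivity
    have hρ2 : (0:ℝ) ≤ ‖z₀‖ + r := by positivity
    rw [norm_mul, norm_mul, norm_pow, norm_pow]
    calc ‖e k‖ * ‖z₀ - z‖ ^ (n-k) * ‖z‖ ^ k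
        ≤ (1 / ‖z₀‖ ^ (n-k)) * r ^ (n-k) * (‖z₀‖ + r) ^ k := by
          gcongr
          all_goals first | exact hbound k hk' | exact hz0z | exact hzb
      _ = (r / ‖z₀‖) ^ (n-k) * (‖z₀‖ + r) ^ k := by
          rw [div_pow]
          ring
      _ ≤ ρ ^ (n-k) * ρ ^ k := by
          gcongr
          all_goals first | exact le_max_left _ _ | exact le_max_right _ _
      _ = ρ ^ n := by
          rw [← pow_add]
          congr 1
          omega
  calc ‖lam - q.eval z‖
      = ‖∑ k ∈ range (n+1), e k * (z₀ - z)^(n-k) * z^k‖ := by rw [h1]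
    _ ≤ ∑ k ∈ range (n+1), ‖e k * (z₀ - z)^(n-k) * z^k‖ :=
        norm_sum_le _ _
    _ ≤ ∑ _k ∈ range (n+1), ρ ^ n := Finset.sum_le_sum hterm
    _ = (n + 1) * ρ ^ n := by
        rw [Finset.sum_const, Finset.card_range, nsmul_eq_mul]
        push_cast
        ring
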